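/- Let G be a finite group and χ an irreducible complex character of G whose degree χ(1) is divisible by some prime. Then there exists g ∈ G with χ(g) = 0. -/

import Mathlib

open Polynomial Finset

noncomputable section

namespace BurnsideZero

lemma trace_pow_decomp {W : Type} [AddCommGroup W] [Module ℂ W] [FiniteDimensional ℂ W]
    (E : Module.End ℂ W) {n : ℕ} (hn : 0 < n) {ζ : ℂ}
    (hζ : IsPrimitiveRoot ζ n) (hE : E ^ n = 1) :
    ∃ m : ℕ → ℕ, ∀ k : ℕ,
      LinearMap.trace ℂ W (E ^ k) = ∑ j ∈ range n, (m j : ℂ) * ζ ^ (j * k) := by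
  classical
  haveI : NeZero n := ⟨hn.ne'⟩
  set v : ℕ → ℂ := fun j => ζ ^ j with hv
  have hinj : Set.InjOn v (range n) := fun i hi j hj hij =>
    hζ.pow_inj (mem_range.mp hi) (mem_range.mp hj) hij
  have hnodal : Lagrange.nodal (range n) v = X ^ n - 1 := by
    rw [Lagrange.nodal_eq, Polynomial.X_pow_sub_one_eq_prod hn hζ]
    refine Finset.prod_nbij (fun j => v j) ?_ ?_ ?_ ?_
    · intro j hj
      rw [Polynomial.mem_nthRootsFinset hn]
      rw [hv, ← pow_mul, mul_comm, pow_mul, hζ.pow_eq_one, one_pow]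
    · exact hinj
    · intro μ hμ
      obtain ⟨i, hi, rfl⟩ := hζ.eq_pow_of_pow_eq_one ((Polynomial.mem_nthRootsFinset hn _).mp hμ)
      exact ⟨i, by simpa using hi, rfl⟩
    · intro j hj; rfl
  have haeval0 : (aeval E) (Lagrange.nodal (range n) v) = 0 := by
    rw [hnodal, map_sub, map_pow, aeval_X, map_one, hE, sub_self]
  have hzero : ∀ p : ℂ[X], Lagrange.nodal (range n) v ∣ p → (aeval E) p = 0 := by
    rintro p ⟨q, rfl⟩
    rw [map_mul, haeval0, zero_mul]
  have hbasis : ∀ i ∈ range n, Lagrange.basis (range n) v i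
      = C (Lagrange.nodalWeight (range n) v i) * Lagrange.nodal ((range n).erase i) v := by
    intro i hi
    rw [Lagrange.basis_eq_prod_sub_inv_mul_nodal_div hi, ← Lagrange.nodal_erase_eq_nodal_div hi]
  have hdvd1 : ∀ i ∈ range n,
      Lagrange.nodal (range n) v ∣ (X - C (v i)) * Lagrange.basis (range n) v i := by
    intro i hi
    refine ⟨C (Lagrange.nodalWeight (range n) v i), ?_⟩
    rw [hbasis i hi, Lagrange.nodal_eq_mul_nodal_erase hi]
    ring
  have hdvd2 : ∀ i ∈ range n, ∀ j ∈ range n, i ≠ j →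
      Lagrange.nodal (range n) v ∣ Lagrange.basis (range n) v i * Lagrange.basis (range n) v j := by
    intro i hi j hj hij
    have hj' : j ∈ (range n).erase i := mem_erase.mpr ⟨hij.symm, hj⟩
    refine ⟨C (Lagrange.nodalWeight (range n) v i) * C (Lagrange.nodalWeight (range n) v j) *
      Lagrange.nodal (((range n).erase i).erase j) v, ?_⟩
    rw [hbasis i hi, hbasis j hj, Lagrange.nodal_eq_mul_nodal_erase hj',
      Lagrange.nodal_eq_mul_nodal_erase hj]
    ring
  set P : ℕ → Module.End ℂ W := fun i => aeval E (Lagrange.basis (range n) v i) with hP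
  have hsum : ∑ i ∈ range n, P i = 1 := by
    rw [hP, ← map_sum, Lagrange.sum_basis hinj ⟨0, mem_range.mpr hn⟩, map_one]
  have horth : ∀ i ∈ range n, ∀ j ∈ range n, i ≠ j → P i * P j = 0 := by
    intro i hi j hj hij
    rw [hP, ← map_mul]
    exact hzero _ (hdvd2 i hi j hj hij)
  have hidem : ∀ i ∈ range n, P i * P i = P i := by
    intro i hi
    have h1 : P i * (∑ j ∈ range n, P j) = P i := by rw [hsum, mul_one]
    rw [Finset.mul_sum, Finset.sum_eq_single_of_mem i hi
      (fun j hj hne => horth i hi j hj (Ne.symm hne))] at h1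
    exact h1
  have htr : ∀ i ∈ range n, ∃ mi : ℕ, LinearMap.trace ℂ W (P i) = mi := by
    intro i hi
    obtain ⟨p, hp⟩ := (LinearMap.isProj_iff_isIdempotentElem (P i)).mpr
      (hidem i hi)
    exact ⟨Module.finrank ℂ p, hp.trace⟩
  have hEP : ∀ i ∈ range n, E * P i = v i • P i := by
    intro i hi
    have h0 := hzero _ (hdvd1 i hi)
    rw [map_mul, map_sub, aeval_X, aeval_C] at h0
    have h1 : (E - v i • 1) * P i = 0 := by
      simpa [Algebra.algebraMap_eq_smul_one] using h0
    rw [sub_mul, sub_eq_zero] at h1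
    rw [h1, smul_mul_assoc, one_mul]
  have hEkP : ∀ k : ℕ, ∀ i ∈ range n, E ^ k * P i = (v i ^ k) • P i := by
    intro k
    induction k with
    | zero => intro i hi; simp
    | succ k ih =>
      intro i hi
      rw [pow_succ', mul_assoc, ih i hi, mul_smul_comm, hEP i hi, smul_smul, pow_succ',
        mul_comm]
  choose mfun hmfun using htr
  refine ⟨fun i => if hi : i ∈ range n then mfun i hi else 0, fun k => ?_⟩
  have hEk : E ^ k = ∑ i ∈ range n, (v i ^ k) • P i := by
    calc E ^ k = E ^ k * ∑ i ∈ range n, P i := by rw [hsum, mul_one]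
    _ = ∑ i ∈ range n, E ^ k * P i := by rw [Finset.mul_sum]
    _ = ∑ i ∈ range n, (v i ^ k) • P i := Finset.sum_congr rfl fun i hi => hEkP k i hi
  rw [hEk, map_sum]
  refine Finset.sum_congr rfl fun i hi => ?_
  rw [LinearMap.map_smul, hmfun i hi]
  simp only [dif_pos hi, hv, smul_eq_mul, ← pow_mul]
  ring

lemma char_decomp {G : Type} [Group G] [Fintype G] (V : FDRep ℂ G) {ζ : ℂ}
    (hζ : IsPrimitiveRoot ζ (Fintype.card G)) (g : G) :
    ∃ m : ℕ → ℕ, ∀ k : ℕ, V.character (g ^ k)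
      = ∑ j ∈ range (Fintype.card G), (m j : ℂ) * ζ ^ (j * k) := by
  have hE : (V.ρ g) ^ (Fintype.card G) = 1 := by
    rw [← map_pow, pow_card_eq_one, map_one]
  obtain ⟨m, hm⟩ := trace_pow_decomp (V.ρ g) Fintype.card_pos hζ hE
  refine ⟨m, fun k => ?_⟩
  rw [FDRep.character, map_pow]
  exact hm k

end BurnsideZero

open BurnsideZero

set_option maxHeartbeats 2000000 in
theorem stmt_9 {G : Type} [Group G] [Fintype G] (V : FDRep ℂ G)
    (hirr : CategoryTheory.Simple V)
    (h : ∃ r : ℕ, r.Prime ∧ r ∣ Module.finrank ℂ V) :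
    ∃ g : G, V.character g = 0 := by
  classical
  haveI := hirr
  by_contra hcon
  push_neg at hcon
  set d := Module.finrank ℂ V with hd
  have hd2 : 2 ≤ d := by
    obtain ⟨r, hr, hrd⟩ := h
    rcases Nat.eq_zero_or_pos d with h0 | h0
    · exact absurd (by rw [FDRep.char_one, ← hd, h0, Nat.cast_zero]) (hcon 1)
    · exact le_trans hr.two_le (Nat.le_of_dvd h0 hrd)
  set n := Fintype.card G with hn
  have hn0 : 0 < n := Fintype.card_pos
  haveI : NeZero n := ⟨hn0.ne'⟩
  set np : ℕ+ := ⟨n, hn0⟩ with hnp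
  haveI : NeZero (np : ℕ) := ⟨np.ne_zero⟩
  haveI : NeZero ((np : ℕ) : ℚ) := ⟨by exact_mod_cast np.ne_zero⟩
  haveI : IsCyclotomicExtension {(np : ℕ)} ℚ (CyclotomicField np ℚ) :=
    CyclotomicField.isCyclotomicExtension _ _
  haveI hGal : IsGalois ℚ (CyclotomicField np ℚ) := IsCyclotomicExtension.isGalois {(np : ℕ)} ℚ _
  haveI : FiniteDimensional ℚ (CyclotomicField np ℚ) :=
    IsCyclotomicExtension.finiteDimensional (S := {(np : ℕ)}) (K := ℚ) _
  set φ : CyclotomicField np ℚ →ₐ[ℚ] ℂ :=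
    Polynomial.SplittingField.lift _
      (IsAlgClosed.splits ((Polynomial.cyclotomic np ℚ).map (algebraMap ℚ ℂ))) with hφdef
  have hφ : Function.Injective φ := φ.toRingHom.injective
  set ζK := IsCyclotomicExtension.zeta np ℚ (CyclotomicField np ℚ) with hζKdef
  have hζK : IsPrimitiveRoot ζK n := IsCyclotomicExtension.zeta_spec np ℚ _
  set ζ := φ ζK with hζdef
  have hζ : IsPrimitiveRoot ζ n := hζK.map_of_injective hφ
  -- decomposition of character values
  choose m hm using fun g : G => char_decomp V hζ g
  have hchar : ∀ g : G, V.character g = ∑ j ∈ range n, (m g j : ℂ) * ζ ^ j := by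
    intro g
    have h1 := hm g 1
    simpa using h1
  -- the K-valued character
  set c : G → CyclotomicField np ℚ :=
    fun g => ∑ j ∈ range n, (m g j : CyclotomicField np ℚ) * ζK ^ j with hc
  have hφc : ∀ g : G, φ (c g) = V.character g := by
    intro g
    rw [hchar g]
    simp only [hc, map_sum, map_mul, map_natCast, map_pow, ← hζdef]
  have hσa : ∀ σ : CyclotomicField np ℚ ≃ₐ[ℚ] CyclotomicField np ℚ,
      ∃ a : ℕ, a.Coprime n ∧ ∀ g : G, σ (c g) = c (g ^ a) := by
    intro σ
    have h1 : (σ ζK) ^ n = 1 := by rw [← map_pow, hζK.pow_eq_one, map_one]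
    obtain ⟨a, _, ha⟩ := hζK.eq_pow_of_pow_eq_one h1
    have hprim : IsPrimitiveRoot (ζK ^ a) n := ha ▸ hζK.map_of_injective σ.injective
    have hcop : a.Coprime n := (hζK.pow_iff_coprime hn0 a).mp hprim
    refine ⟨a, hcop, fun g => ?_⟩
    apply hφ
    have hσζ : φ (σ ζK) = ζ ^ a := by rw [← ha, map_pow]
    have hL : φ (σ (c g)) = ∑ j ∈ range n, (m g j : ℂ) * ζ ^ (j * a) := by
      simp only [hc, map_sum, map_mul, map_natCast, map_pow, hσζ, ← pow_mul]
      exact Finset.sum_congr rfl fun j _ => by rw [Nat.mul_comm a j]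
    rw [hL, ← hm g a, hφc (g ^ a)]
  -- the product over nonidentity elements
  set s : Finset G := Finset.univ.erase 1 with hs
  set N : CyclotomicField np ℚ := ∏ g ∈ s, c g with hN
  have hfix : ∀ σ : CyclotomicField np ℚ ≃ₐ[ℚ] CyclotomicField np ℚ, σ N = N := by
    intro σ
    obtain ⟨a, hcop, hca⟩ := hσa σ
    have hcop' : (Nat.card G).Coprime a := by
      rw [Nat.card_eq_fintype_card]; exact hcop.symm
    set e : G ≃ G := powCoprime hcop' with he
    have heapp : ∀ g : G, e g = g ^ a := fun g => rfl
    rw [hN, map_prod, Finset.prod_congr rfl fun g _ => hca g]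
    refine Finset.prod_nbij' (fun g => g ^ a) (fun g => e.symm g) ?_ ?_ ?_ ?_ ?_
    · intro g hg
      simp only [hs, Finset.mem_erase, Finset.mem_univ, and_true] at hg ⊢
      intro h1
      exact hg (e.injective (show e g = e 1 by simpa [heapp] using h1))
    · intro g hg
      simp only [hs, Finset.mem_erase, Finset.mem_univ, and_true] at hg ⊢
      intro h1
      apply hg
      have h3 := congrArg e h1
      rw [Equiv.apply_symm_apply, heapp, one_pow] at h3
      exact h3
    · intro g _
      exact e.symm_apply_apply g
    · intro g _
      exact e.apply_symm_apply g
    · intro g _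
      rfl
  -- N is a rational integer
  have h01 := (IsGalois.tfae (F := ℚ) (E := CyclotomicField np ℚ)).out 0 1
  have htop : IntermediateField.fixedField
      (⊤ : Subgroup (CyclotomicField np ℚ ≃ₐ[ℚ] CyclotomicField np ℚ)) = ⊥ := h01.mp hGal
  have hNbot : N ∈ (⊥ : IntermediateField ℚ (CyclotomicField np ℚ)) := by
    rw [← htop]
    rintro ⟨σ, -⟩
    exact hfix σ
  obtain ⟨q, hq⟩ := IntermediateField.mem_bot.mp hNbot
  have hφN : φ N = ∏ g ∈ s, V.character g := by
    rw [hN, map_prod]; exact Finset.prod_congr rfl fun g _ => hφc g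
  have hφNq : φ N = algebraMap ℚ ℂ q := by rw [← hq, AlgHom.commutes]
  have hζint : IsIntegral ℤ ζ := by
    have h1 : IsIntegral ℤ (ζ ^ n) := by rw [hζ.pow_eq_one]; exact isIntegral_one
    exact h1.of_pow hn0
  have hchint : ∀ g : G, IsIntegral ℤ (V.character g) := by
    intro g
    rw [hchar g]
    have : (∑ j ∈ range n, (m g j : ℂ) * ζ ^ j) ∈ integralClosure ℤ ℂ :=
      Subalgebra.sum_mem _ fun j _ => Subalgebra.mul_mem _ (Subalgebra.natCast_mem _ _)
        (Subalgebra.pow_mem _ hζint _)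
    exact this
  have hNint : IsIntegral ℤ (φ N) := by
    rw [hφN]
    have : (∏ g ∈ s, V.character g) ∈ integralClosure ℤ ℂ :=
      Subalgebra.prod_mem _ fun g _ => hchint g
    exact this
  have hqint : IsIntegral ℤ q := by
    rw [hφNq] at hNint
    exact (isIntegral_algebraMap_iff ((algebraMap ℚ ℂ).injective)).mp hNint
  obtain ⟨z, hz⟩ := IsIntegrallyClosed.isIntegral_iff.mp hqint
  have hNz : φ N = (z : ℂ) := by
    rw [hφNq, ← hz]
    simp
  have hNne : φ N ≠ 0 := by
    rw [hφN]; exact Finset.prod_ne_zero_iff.mpr fun g _ => hcon g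
  have hz0 : z ≠ 0 := by
    rintro rfl
    rw [Int.cast_zero] at hNz
    exact hNne hNz
  have hge1 : (1 : ℝ) ≤ Complex.normSq (φ N) := by
    rw [hNz]
    have he1 : Complex.normSq ((z : ℤ) : ℂ) = (z : ℝ) * (z : ℝ) := by
      rw [show ((z : ℤ) : ℂ) = (((z : ℝ) : ℝ) : ℂ) by push_cast; ring, Complex.normSq_ofReal]
    rw [he1]
    have h1 : (1 : ℝ) ≤ |(z : ℝ)| := by exact_mod_cast Int.one_le_abs hz0
    calc (1:ℝ) ≤ |(z:ℝ)| * |(z:ℝ)| := by nlinarith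
    _ = (z:ℝ) * (z:ℝ) := abs_mul_abs_self _
  -- conjugation
  have habs1 : ∀ j : ℕ, ‖ζ ^ j‖ = 1 := by
    intro j
    rw [norm_pow, hζ.norm'_eq_one hn0.ne', one_pow]
  have hgi : ∀ g : G, g⁻¹ = g ^ (n - 1) := by
    intro g
    apply inv_eq_of_mul_eq_one_right
    rw [← pow_succ', Nat.sub_add_cancel hn0]
    exact pow_card_eq_one
  have hconj : ∀ g : G, V.character g⁻¹ = (starRingEnd ℂ) (V.character g) := by
    intro g
    rw [hgi g, hm g (n - 1), hchar g, map_sum]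
    refine Finset.sum_congr rfl fun j hj => ?_
    rw [map_mul, map_natCast]
    congr 1
    rw [← Complex.inv_eq_conj (habs1 j)]
    apply eq_inv_of_mul_eq_one_left
    rw [← pow_add]
    have hj' : j * (n - 1) + j = j * n := by
      have h2 : n - 1 + 1 = n := Nat.succ_pred_eq_of_pos hn0
      calc j * (n - 1) + j = j * ((n - 1) + 1) := by ring
      _ = j * n := by rw [h2]
    rw [hj', Nat.mul_comm j n, pow_mul, hζ.pow_eq_one, one_pow]
  -- orthogonality
  have hc0 : (Nat.card G : ℂ) ≠ 0 := Nat.cast_ne_zero.mpr Nat.card_pos.ne'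
  letI : Invertible ((Nat.card G : ℂ)) := invertibleOfNonzero hc0
  have horth := FDRep.char_orthonormal (k := ℂ) (G := G) V V
  rw [if_pos ⟨CategoryTheory.Iso.refl V⟩] at horth
  have h2 := congrArg (HMul.hMul ((Nat.card G : ℂ))) horth
  rw [mul_inv_cancel_left₀ hc0, mul_one, Nat.card_eq_fintype_card] at h2
  have hsumC : ∑ g : G, V.character g * V.character g⁻¹ = (n : ℂ) := h2
  have hsumR : ∑ g : G, Complex.normSq (V.character g) = (n : ℝ) := by
    have hC : ∑ g : G, (Complex.normSq (V.character g) : ℂ) = (n : ℂ) := by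
      rw [← hsumC]
      exact Finset.sum_congr rfl fun g _ => by rw [hconj g, Complex.mul_conj]
    exact_mod_cast hC
  have hx1 : Complex.normSq (V.character 1) = (d : ℝ) * (d : ℝ) := by
    rw [FDRep.char_one, ← hd]
    rw [show ((d : ℕ) : ℂ) = (((d : ℝ) : ℝ) : ℂ) by push_cast; ring, Complex.normSq_ofReal]
  have hsplit : ∑ g ∈ s, Complex.normSq (V.character g) = (n : ℝ) - (d : ℝ) * (d : ℝ) := by
    have h3 := Finset.add_sum_erase Finset.univ
      (fun g => Complex.normSq (V.character g)) (Finset.mem_univ (1 : G))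
    rw [hx1] at h3
    rw [hsumR] at h3
    rw [hs]
    linarith
  have hdn : (d : ℝ) * (d : ℝ) ≤ (n : ℝ) := by
    have h0 : 0 ≤ ∑ g ∈ s, Complex.normSq (V.character g) :=
      Finset.sum_nonneg fun g _ => Complex.normSq_nonneg _
    linarith
  have hd2' : (2 : ℝ) ≤ (d : ℝ) := by exact_mod_cast hd2
  have hcard : (s.card : ℝ) = (n : ℝ) - 1 := by
    rw [hs, Finset.card_erase_of_mem (Finset.mem_univ _), Finset.card_univ, ← hn,
      Nat.cast_sub hn0]
    norm_num
  have hNcpos : (0 : ℝ) < (s.card : ℝ) := by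
    rw [hcard]; nlinarith
  have hgm := Real.geom_mean_le_arith_mean_weighted s (fun _ => ((s.card : ℝ))⁻¹)
      (fun g => Complex.normSq (V.character g)) (fun _ _ => inv_nonneg.mpr (Nat.cast_nonneg _))
      (by rw [Finset.sum_const, nsmul_eq_mul, mul_inv_cancel₀ hNcpos.ne'])
      (fun g _ => Complex.normSq_nonneg _)
  rw [Real.finset_prod_rpow s _ (fun i _ => Complex.normSq_nonneg _) _] at hgm
  have hprodN : ∏ g ∈ s, Complex.normSq (V.character g) = Complex.normSq (φ N) := by
    rw [hφN, map_prod Complex.normSq]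
  have hLB : (1 : ℝ) ≤ (∏ g ∈ s, Complex.normSq (V.character g)) ^ ((s.card : ℝ))⁻¹ := by
    calc (1:ℝ) = (1:ℝ) ^ ((s.card : ℝ))⁻¹ := (Real.one_rpow _).symm
    _ ≤ _ := Real.rpow_le_rpow zero_le_one (by rw [hprodN]; exact hge1) (inv_nonneg.mpr (Nat.cast_nonneg _))
  have hUB : ∑ g ∈ s, ((s.card : ℝ))⁻¹ * Complex.normSq (V.character g) < 1 := by
    rw [← Finset.mul_sum, hsplit, ← div_eq_inv_mul, div_lt_one hNcpos, hcard]
    nlinarith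
  linarith
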